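/- In the partition algebra 𝐏ₙ(δ) with δ ≠ 0, two diagrams τ, ρ ∈ Pₙ generate the same two-sided ideal (𝐏ₙ τ 𝐏ₙ = 𝐏ₙ ρ 𝐏ₙ) if and only if r(τ) = r(ρ). -/
import Mathlib


open scoped Classical
open Relation
noncomputable section

/-- Vertices of a diagram: `inl` = unprimed points `n̄`, `inr` = primed points `n̄'`. -/
abbrev DVert (n : ℕ) := Fin n ⊕ Fin n

/-- Tripled vertex set used for gluing: bottom (unprimed of the right factor),
middle (identified vertices), top (primed of the left factor). -/
abbrev TVert (n : ℕ) := Fin n ⊕ (Fin n ⊕ Fin n)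

def embBot (n : ℕ) : DVert n → TVert n := Sum.elim Sum.inl (fun i => Sum.inr (Sum.inl i))
def embTop (n : ℕ) : DVert n → TVert n :=
  Sum.elim (fun i => Sum.inr (Sum.inl i)) (fun i => Sum.inr (Sum.inr i))
def embOut (n : ℕ) : DVert n → TVert n := Sum.elim Sum.inl (fun i => Sum.inr (Sum.inr i))

/-- The minimal equivalence relation `χ` on the tripled vertex set containing
(the embedded copies of) `τ` and `ρ`. -/
def glue (n : ℕ) (τ ρ : Setoid (DVert n)) : Setoid (TVert n) :=
  EqvGen.setoid (fun x y =>
    (∃ a b, ρ.r a b ∧ x = embBot n a ∧ y = embBot n b) ∨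
    (∃ a b, τ.r a b ∧ x = embTop n a ∧ y = embTop n b))

/-- Composition `τ ∘ ρ` in the partition monoid: glue and restrict to the outer vertices. -/
def pcomp (n : ℕ) (τ ρ : Setoid (DVert n)) : Setoid (DVert n) where
  r x y := (glue n τ ρ).r (embOut n x) (embOut n y)
  iseqv := ⟨fun _ => (glue n τ ρ).iseqv.refl _, fun h => (glue n τ ρ).iseqv.symm h,
    fun h₁ h₂ => (glue n τ ρ).iseqv.trans h₁ h₂⟩

/-- A middle vertex of the tripled vertex set. -/
def isMiddle {n : ℕ} (x : TVert n) : Prop := ∃ i, x = Sum.inr (Sum.inl i)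

/-- `c(τ,ρ)`: the number of classes of the glued relation contained in the middle row. -/
def ccount (n : ℕ) (τ ρ : Setoid (DVert n)) : ℕ :=
  {C ∈ (glue n τ ρ).classes | ∀ x ∈ C, isMiddle x}.ncard

/-- A propagating part: one meeting both the unprimed and the primed vertices. -/
def IsPropagating {n : ℕ} (C : Set (DVert n)) : Prop :=
  (∃ i, Sum.inl i ∈ C) ∧ (∃ i, Sum.inr i ∈ C)

/-- The rank `r(σ)`: the number of propagating parts of `σ`. -/
def prank (n : ℕ) (σ : Setoid (DVert n)) : ℕ :=
  {C ∈ σ.classes | IsPropagating C}.ncard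

/-- The anti-involution `⋆` swapping primed and unprimed vertices. -/
def pstar (n : ℕ) (σ : Setoid (DVert n)) : Setoid (DVert n) where
  r x y := σ.r x.swap y.swap
  iseqv := ⟨fun _ => σ.iseqv.refl _, fun h => σ.iseqv.symm h,
    fun h₁ h₂ => σ.iseqv.trans h₁ h₂⟩

/-- Minimal unprimed vertex of a part. -/
def minL {n : ℕ} (C : Set (DVert n)) : ℕ :=
  sInf {m : ℕ | ∃ j : Fin n, (j : ℕ) = m ∧ Sum.inl j ∈ C}

/-- Minimal primed vertex of a part. -/
def minR {n : ℕ} (C : Set (DVert n)) : ℕ :=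
  sInf {m : ℕ | ∃ j : Fin n, (j : ℕ) = m ∧ Sum.inr j ∈ C}

/-- Position of a propagating part `C` of `σ` in the ordering (by minimal elements) of the
intersections of the propagating parts with the unprimed vertices. -/
def posL (n : ℕ) (σ : Setoid (DVert n)) (C : Set (DVert n)) : ℕ :=
  {D ∈ σ.classes | IsPropagating D ∧ minL D < minL C}.ncard

/-- Position of a propagating part `C` of `σ` in the ordering (by minimal elements) of the
intersections of the propagating parts with the primed vertices. -/
def posR (n : ℕ) (σ : Setoid (DVert n)) (C : Set (DVert n)) : ℕ :=
  {D ∈ σ.classes | IsPropagating D ∧ minR D < minR C}.ncard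

/-- The permutation `π_σ ∈ S_k` recording how propagating lines connect the two sides of `σ`
(for a diagram of rank `k`): the unique permutation sending the position of a propagating part
on the unprimed side to its position on the primed side. -/
def permAt (n k : ℕ) (σ : Setoid (DVert n)) : Equiv.Perm (Fin k) :=
  Classical.epsilon (fun π : Equiv.Perm (Fin k) =>
    ∀ C ∈ σ.classes, IsPropagating C → ∀ h : posL n σ C < k,
      ((π ⟨posL n σ C, h⟩ : Fin k) : ℕ) = posR n σ C)

/-- The product of the partition algebra `𝐏ₙ(δ)` on the free vector space on diagrams. -/
def pmul (n : ℕ) (δ : ℂ) (f g : Setoid (DVert n) →₀ ℂ) : Setoid (DVert n) →₀ ℂ :=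
  f.sum fun τ a => g.sum fun ρ b =>
    Finsupp.single (pcomp n τ ρ) (δ ^ ccount n τ ρ * (a * b))

/-- `i(π,s)`: the number of pairs `i < j` with `s i = j` and `π i > π j`. -/
def icount (n : ℕ) (π s : Equiv.Perm (Fin n)) : ℕ :=
  (Finset.univ.filter fun p : Fin n × Fin n => p.1 < p.2 ∧ s p.1 = p.2 ∧ π p.2 < π p.1).card


section Helpers

variable {n : ℕ}

/-- Saturation: a set closed under the generating relation is closed under `EqvGen`. -/
lemma eqvGen_mem_iff {α : Type*} {r : α → α → Prop} {K : Set α}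
    (hK : ∀ x y, r x y → (x ∈ K ↔ y ∈ K)) :
    ∀ x y, Relation.EqvGen r x y → (x ∈ K ↔ y ∈ K) := by
  intro x y h
  induction h with
  | rel a b hab => exact hK a b hab
  | refl a => rfl
  | symm a b _ ih => exact ih.symm
  | trans a b c _ _ ih1 ih2 => exact ih1.trans ih2

lemma glue_label {τ ρ : Setoid (DVert n)} {β : Type*} (L : TVert n → β)
    (h1 : ∀ a b, ρ.r a b → L (embBot n a) = L (embBot n b))
    (h2 : ∀ a b, τ.r a b → L (embTop n a) = L (embTop n b)) :
    ∀ x y, (glue n τ ρ).r x y → L x = L y := by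
  intro x y h
  induction h with
  | rel a b hab =>
    rcases hab with ⟨a', b', hr, rfl, rfl⟩ | ⟨a', b', hr, rfl, rfl⟩
    · exact h1 a' b' hr
    · exact h2 a' b' hr
  | refl a => rfl
  | symm a b _ ih => exact ih.symm
  | trans a b c _ _ ih1 ih2 => exact ih1.trans ih2

lemma glue_bot {τ ρ : Setoid (DVert n)} {a b : DVert n} (h : ρ.r a b) :
    (glue n τ ρ).r (embBot n a) (embBot n b) :=
  Relation.EqvGen.rel _ _ (Or.inl ⟨a, b, h, rfl, rfl⟩)

lemma glue_top {τ ρ : Setoid (DVert n)} {a b : DVert n} (h : τ.r a b) :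
    (glue n τ ρ).r (embTop n a) (embTop n b) :=
  Relation.EqvGen.rel _ _ (Or.inr ⟨a, b, h, rfl, rfl⟩)

lemma glue_sat {τ ρ : Setoid (DVert n)} {K : Set (TVert n)}
    (h1 : ∀ a b, ρ.r a b → (embBot n a ∈ K ↔ embBot n b ∈ K))
    (h2 : ∀ a b, τ.r a b → (embTop n a ∈ K ↔ embTop n b ∈ K)) :
    ∀ x y, (glue n τ ρ).r x y → (x ∈ K ↔ y ∈ K) := by
  refine eqvGen_mem_iff ?_
  rintro x y (⟨a, b, hr, rfl, rfl⟩ | ⟨a, b, hr, rfl, rfl⟩)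
  · exact h1 a b hr
  · exact h2 a b hr

/-- The set of propagating classes. -/
def propC (n : ℕ) (σ : Setoid (DVert n)) : Set (Set (DVert n)) :=
  {C ∈ σ.classes | IsPropagating C}

lemma prank_eq (σ : Setoid (DVert n)) : prank n σ = (propC n σ).ncard := rfl

lemma rel_of_mem_class {α : Type*} {σ : Setoid α} {C : Set α} (hC : C ∈ σ.classes)
    {x y : α} (hx : x ∈ C) (hy : y ∈ C) : σ.r x y := by
  obtain ⟨z, rfl⟩ := hC
  exact σ.trans' hx (σ.symm' hy)

lemma mem_class_iff {α : Type*} {σ : Setoid α} {C : Set α} (hC : C ∈ σ.classes)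
    {x y : α} (hx : x ∈ C) (h : σ.r x y) : y ∈ C := by
  obtain ⟨z, rfl⟩ := hC
  exact σ.trans' (σ.symm' h) hx

lemma class_eq_of_rel {α : Type*} {σ : Setoid α} {C C' : Set α} (hC : C ∈ σ.classes)
    (hC' : C' ∈ σ.classes) {x y : α} (hx : x ∈ C) (hy : y ∈ C') (h : σ.r x y) : C = C' :=
  Setoid.eq_of_mem_classes hC hx hC' (mem_class_iff hC' hy (σ.symm' h))

end Helpers
section Crossing

variable {n : ℕ}

lemma crossing_bot {τ ρ : Setoid (DVert n)} {i j : Fin n}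
    (h : (glue n τ ρ).r (Sum.inl i) (Sum.inr (Sum.inr j))) :
    ∃ m, ρ.r (Sum.inl i) (Sum.inr m) := by
  by_contra hno
  push_neg at hno
  set K : Set (TVert n) := embBot n '' {a | ρ.r (Sum.inl i) a} with hKdef
  have hsat : ∀ x y, (glue n τ ρ).r x y → (x ∈ K ↔ y ∈ K) := by
    refine glue_sat ?_ ?_
    · intro a b hr
      constructor
      · rintro ⟨c, hc, hcb⟩
        have : a = c := by
          cases a <;> cases c <;> simp [embBot] at hcb <;> simp [hcb]
        exact ⟨b, ρ.trans' (this ▸ hc) hr, rfl⟩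
      · rintro ⟨c, hc, hcb⟩
        have : b = c := by
          cases b <;> cases c <;> simp [embBot] at hcb <;> simp [hcb]
        exact ⟨a, ρ.trans' (this ▸ hc) (ρ.symm' hr), rfl⟩
    · intro a b _
      have key : ∀ c : DVert n, embTop n c ∉ K := by
        rintro c ⟨d, hd, hdc⟩
        cases c <;> cases d <;> simp [embBot, embTop] at hdc
        subst hdc; exact hno _ hd
      simp [key a, key b]
  have hi : (Sum.inl i : TVert n) ∈ K := ⟨Sum.inl i, ρ.refl' _, rfl⟩
  have hj : (Sum.inr (Sum.inr j) : TVert n) ∈ K := (hsat _ _ h).1 hi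
  rcases hj with ⟨c, _, hc⟩
  cases c <;> simp [embBot] at hc

lemma crossing_top {τ ρ : Setoid (DVert n)} {i j : Fin n}
    (h : (glue n τ ρ).r (Sum.inl i) (Sum.inr (Sum.inr j))) :
    ∃ m, τ.r (Sum.inl m) (Sum.inr j) := by
  by_contra hno
  push_neg at hno
  set K : Set (TVert n) := embTop n '' {a | τ.r a (Sum.inr j)} with hKdef
  have hsat : ∀ x y, (glue n τ ρ).r x y → (x ∈ K ↔ y ∈ K) := by
    refine glue_sat ?_ ?_
    · intro a b _
      have key : ∀ c : DVert n, embBot n c ∉ K := by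
        rintro c ⟨d, hd, hdc⟩
        cases c <;> cases d <;> simp [embBot, embTop] at hdc
        subst hdc; exact hno _ hd
      simp [key a, key b]
    · intro a b hr
      constructor
      · rintro ⟨c, hc, hcb⟩
        have : a = c := by
          cases a <;> cases c <;> simp [embTop] at hcb <;> simp [hcb]
        exact ⟨b, τ.trans' (τ.symm' hr) (this ▸ hc), rfl⟩
      · rintro ⟨c, hc, hcb⟩
        have : b = c := by
          cases b <;> cases c <;> simp [embTop] at hcb <;> simp [hcb]
        exact ⟨a, τ.trans' hr (this ▸ hc), rfl⟩
  have hj : (Sum.inr (Sum.inr j) : TVert n) ∈ K := ⟨Sum.inr j, τ.refl' _, rfl⟩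
  have hi : (Sum.inl i : TVert n) ∈ K := (hsat _ _ h).2 hj
  rcases hi with ⟨c, _, hc⟩
  cases c <;> simp [embTop] at hc

end Crossing
section RankBound

variable {n : ℕ}

@[simp] lemma embBot_inl (i : Fin n) : embBot n (Sum.inl i) = Sum.inl i := rfl
@[simp] lemma embBot_inr (i : Fin n) : embBot n (Sum.inr i) = Sum.inr (Sum.inl i) := rfl
@[simp] lemma embTop_inl (i : Fin n) : embTop n (Sum.inl i) = Sum.inr (Sum.inl i) := rfl
@[simp] lemma embTop_inr (i : Fin n) : embTop n (Sum.inr i) = Sum.inr (Sum.inr i) := rfl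
@[simp] lemma embOut_inl (i : Fin n) : embOut n (Sum.inl i) = Sum.inl i := rfl
@[simp] lemma embOut_inr (i : Fin n) : embOut n (Sum.inr i) = Sum.inr (Sum.inr i) := rfl

lemma pcomp_r {τ ρ : Setoid (DVert n)} {x y : DVert n} :
    (pcomp n τ ρ).r x y ↔ (glue n τ ρ).r (embOut n x) (embOut n y) := Iff.rfl

lemma prank_pcomp_le_right (τ ρ : Setoid (DVert n)) :
    prank n (pcomp n τ ρ) ≤ prank n ρ := by
  set μ := pcomp n τ ρ with hμ
  rw [prank_eq, prank_eq]
  classical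
  set f : Set (DVert n) → Set (DVert n) := fun C =>
    if h : ∃ i, (Sum.inl i : DVert n) ∈ C then {x | ρ.r x (Sum.inl h.choose)} else ∅ with hf
  have hkey : ∀ C ∈ propC n μ, ∃ h : ∃ i, (Sum.inl i : DVert n) ∈ C,
      f C = {x | ρ.r x (Sum.inl h.choose)} ∧ (Sum.inl h.choose : DVert n) ∈ C ∧
      f C ∈ propC n ρ ∧ (Sum.inl h.choose : DVert n) ∈ f C := by
    rintro C ⟨hCcl, hL, hR⟩
    have hfC : f C = {x | ρ.r x (Sum.inl hL.choose)} := by simp [hf, hL]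
    refine ⟨hL, hfC, hL.choose_spec, ?_, by rw [hfC]; exact ρ.refl' _⟩
    obtain ⟨j, hj⟩ := hR
    have hrel : μ.r (Sum.inl hL.choose) (Sum.inr j) :=
      rel_of_mem_class hCcl hL.choose_spec hj
    rw [pcomp_r] at hrel
    simp only [embOut_inl, embOut_inr] at hrel
    obtain ⟨m, hm⟩ := crossing_bot hrel
    rw [hfC] at *
    exact ⟨Setoid.mem_classes ρ _, ⟨hL.choose, ρ.refl' _⟩, ⟨m, ρ.symm' hm⟩⟩
  refine Set.ncard_le_ncard_of_injOn f ?_ ?_ (Set.toFinite _)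
  · intro C hC
    obtain ⟨h, _, _, hmem, _⟩ := hkey C hC
    exact hmem
  · intro C hC C' hC' heq
    obtain ⟨h, hfC, hiC, _, hin⟩ := hkey C hC
    obtain ⟨h', hfC', hiC', _, hin'⟩ := hkey C' hC'
    have : ρ.r (Sum.inl h'.choose) (Sum.inl h.choose) := by
      have := heq ▸ hin'
      rwa [hfC] at this
    have hrel : (pcomp n τ ρ).r (Sum.inl h'.choose) (Sum.inl h.choose) := by
      rw [pcomp_r]; simpa using glue_bot (τ := τ) this
    exact (class_eq_of_rel hC'.1 hC.1 hiC' hiC hrel).symm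

lemma prank_pcomp_le_left (τ ρ : Setoid (DVert n)) :
    prank n (pcomp n τ ρ) ≤ prank n τ := by
  set μ := pcomp n τ ρ with hμ
  rw [prank_eq, prank_eq]
  classical
  set f : Set (DVert n) → Set (DVert n) := fun C =>
    if h : ∃ j, (Sum.inr j : DVert n) ∈ C then {x | τ.r x (Sum.inr h.choose)} else ∅ with hf
  have hkey : ∀ C ∈ propC n μ, ∃ h : ∃ j, (Sum.inr j : DVert n) ∈ C,
      f C = {x | τ.r x (Sum.inr h.choose)} ∧ (Sum.inr h.choose : DVert n) ∈ C ∧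
      f C ∈ propC n τ ∧ (Sum.inr h.choose : DVert n) ∈ f C := by
    rintro C ⟨hCcl, hL, hR⟩
    have hfC : f C = {x | τ.r x (Sum.inr hR.choose)} := by simp [hf, hR]
    refine ⟨hR, hfC, hR.choose_spec, ?_, by rw [hfC]; exact τ.refl' _⟩
    obtain ⟨i, hi⟩ := hL
    have hrel : μ.r (Sum.inl i) (Sum.inr hR.choose) :=
      rel_of_mem_class hCcl hi hR.choose_spec
    rw [pcomp_r] at hrel
    simp only [embOut_inl, embOut_inr] at hrel
    obtain ⟨m, hm⟩ := crossing_top hrel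
    rw [hfC]
    exact ⟨Setoid.mem_classes τ _, ⟨m, hm⟩, ⟨hR.choose, τ.refl' _⟩⟩
  refine Set.ncard_le_ncard_of_injOn f ?_ ?_ (Set.toFinite _)
  · intro C hC
    obtain ⟨h, _, _, hmem, _⟩ := hkey C hC
    exact hmem
  · intro C hC C' hC' heq
    obtain ⟨h, hfC, hiC, _, hin⟩ := hkey C hC
    obtain ⟨h', hfC', hiC', _, hin'⟩ := hkey C' hC'
    have : τ.r (Sum.inr h'.choose) (Sum.inr h.choose) := by
      have := heq ▸ hin'
      rwa [hfC] at this
    have hrel : (pcomp n τ ρ).r (Sum.inr h'.choose) (Sum.inr h.choose) := by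
      rw [pcomp_r]; simpa using glue_top (ρ := ρ) this
    exact (class_eq_of_rel hC'.1 hC.1 hiC' hiC hrel).symm

end RankBound
section Construct

variable {n : ℕ}

def kerS {A B : Type*} (f : A → B) : Setoid A :=
  ⟨fun a b => f a = f b, ⟨fun _ => rfl, Eq.symm, Eq.trans⟩⟩

@[simp] lemma kerS_r {A B : Type*} (f : A → B) (a b : A) :
    (kerS f).r a b ↔ f a = f b := Iff.rfl

lemma class_eq_iff {A : Type*} {σ : Setoid A} {x y : A} :
    {z | σ.r z x} = {z | σ.r z y} ↔ σ.r x y := by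
  constructor
  · intro h
    have : x ∈ {z | σ.r z y} := h ▸ (σ.refl' x)
    exact this
  · intro h
    ext z
    exact ⟨fun hz => σ.trans' hz h, fun hz => σ.trans' hz (σ.symm' h)⟩

lemma class_rep {A : Type*} {σ : Setoid A} {D : Set A} (hD : D ∈ σ.classes) {v : A}
    (hv : v ∈ D) : D = {z | σ.r z v} :=
  Setoid.eq_of_mem_classes hD hv (Setoid.mem_classes σ v) (σ.refl' v)

variable (σ τ : Setoid (DVert n)) (g : Set (DVert n) → Set (DVert n))

def phiBeta : DVert n → Set (DVert n) ⊕ Fin n :=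
  Sum.elim (fun i => Sum.inl {x | σ.r x (Sum.inl i)})
    (fun j => if h : ∃ C ∈ propC n σ, (Sum.inl j : DVert n) ∈ g C then Sum.inl h.choose
      else Sum.inr j)

def phiAlpha : DVert n → Set (DVert n) ⊕ Fin n :=
  Sum.elim (fun m => if h : ∃ C ∈ propC n σ, (Sum.inr m : DVert n) ∈ g C then Sum.inl h.choose
      else Sum.inr m)
    (fun j => Sum.inl {x | σ.r x (Sum.inr j)})

def psiMap : DVert n → Set (DVert n) ⊕ Set (DVert n) :=
  Sum.elim (fun i => if h : ∃ C ∈ propC n σ, g C = {x | τ.r x (Sum.inl i)} then Sum.inl h.choose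
      else Sum.inr {x | τ.r x (Sum.inl i)})
    (fun j => Sum.inl {x | σ.r x (Sum.inr j)})

def L1map : TVert n → Set (DVert n) ⊕ Set (DVert n) :=
  Sum.elim (fun i => psiMap σ τ g (Sum.inl i))
    (Sum.elim (fun m => if h : ∃ C ∈ propC n σ, (Sum.inr m : DVert n) ∈ g C then Sum.inl h.choose
        else Sum.inr {x | τ.r x (Sum.inr m)})
      (fun j => Sum.inl {x | σ.r x (Sum.inr j)}))

def L2map : TVert n → Set (DVert n) ⊕ Set (DVert n) :=
  Sum.elim (fun i => Sum.inl {x | σ.r x (Sum.inl i)})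
    (Sum.elim (fun m => if h : ∃ C ∈ propC n σ, (Sum.inl m : DVert n) ∈ g C then Sum.inl h.choose
        else Sum.inr {x | τ.r x (Sum.inl m)})
      (fun j => Sum.inl {x | σ.r x (Sum.inr j)}))

variable {σ τ g}

lemma uniqB (hg : ∀ C ∈ propC n σ, g C ∈ propC n τ) (hginj : Set.InjOn g (propC n σ))
    {v : DVert n} (h1 : ∃ C ∈ propC n σ, v ∈ g C) {C₀} (hC₀ : C₀ ∈ propC n σ)
    (hv : v ∈ g C₀) : h1.choose = C₀ := by
  obtain ⟨hmem, hvc⟩ := h1.choose_spec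
  exact hginj hmem hC₀ (Setoid.eq_of_mem_classes (hg _ hmem).1 hvc (hg _ hC₀).1 hv)

lemma uniqP (hginj : Set.InjOn g (propC n σ))
    {D : Set (DVert n)} (h1 : ∃ C ∈ propC n σ, g C = D) {C₀} (hC₀ : C₀ ∈ propC n σ)
    (hD : g C₀ = D) : h1.choose = C₀ :=
  hginj h1.choose_spec.1 hC₀ (h1.choose_spec.2.trans hD.symm)

lemma condQP (hg : ∀ C ∈ propC n σ, g C ∈ propC n τ) {m : Fin n} :
    (∃ C ∈ propC n σ, g C = {x | τ.r x (Sum.inl m)}) ↔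
      (∃ C ∈ propC n σ, (Sum.inl m : DVert n) ∈ g C) := by
  constructor
  · rintro ⟨C, hC, heq⟩
    exact ⟨C, hC, by rw [heq]; exact τ.refl' _⟩
  · rintro ⟨C, hC, hm⟩
    exact ⟨C, hC, class_rep (hg _ hC).1 hm⟩

end Construct
section Step1

variable {n : ℕ} {σ τ : Setoid (DVert n)} {g : Set (DVert n) → Set (DVert n)}

lemma condQP' (hg : ∀ C ∈ propC n σ, g C ∈ propC n τ) {m : Fin n} :
    (∃ C ∈ propC n σ, g C = {x | τ.r x (Sum.inr m)}) ↔
      (∃ C ∈ propC n σ, (Sum.inr m : DVert n) ∈ g C) := by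
  constructor
  · rintro ⟨C, hC, heq⟩
    exact ⟨C, hC, by rw [heq]; exact τ.refl' _⟩
  · rintro ⟨C, hC, hm⟩
    exact ⟨C, hC, class_rep (hg _ hC).1 hm⟩

lemma L1out (σ τ : Setoid (DVert n)) (g) (v : DVert n) :
    L1map σ τ g (embOut n v) = psiMap σ τ g v := by
  rcases v with i | j <;> rfl

set_option maxHeartbeats 2000000 in
lemma step1 (hg : ∀ C ∈ propC n σ, g C ∈ propC n τ) (hginj : Set.InjOn g (propC n σ)) :
    pcomp n (kerS (phiAlpha σ g)) τ = kerS (psiMap σ τ g) := by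
  have hcross : ∀ (i j : Fin n), psiMap σ τ g (Sum.inl i) = psiMap σ τ g (Sum.inr j) →
      (pcomp n (kerS (phiAlpha σ g)) τ).r (Sum.inl i) (Sum.inr j) := by
    intro i j hpsi
    by_cases hQ : ∃ C ∈ propC n σ, g C = {x | τ.r x (Sum.inl i)}
    · have hchoose : hQ.choose = {x | σ.r x (Sum.inr j)} := by
        have h2 := hpsi
        simp only [psiMap, Sum.elim_inl, Sum.elim_inr, dif_pos hQ, Sum.inl.injEq] at h2
        exact h2
      obtain ⟨hCmem, hgC⟩ := hQ.choose_spec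
      obtain ⟨m, hm⟩ := (hg _ hCmem).2.2
      have hbot : τ.r (Sum.inl i) (Sum.inr m) := τ.symm' (by rw [hgC] at hm; exact hm)
      have hPm : ∃ C' ∈ propC n σ, (Sum.inr m : DVert n) ∈ g C' := ⟨hQ.choose, hCmem, hm⟩
      have htop : phiAlpha σ g (Sum.inl m) = phiAlpha σ g (Sum.inr j) := by
        simp only [phiAlpha, Sum.elim_inl, Sum.elim_inr, dif_pos hPm]
        rw [uniqB hg hginj hPm hCmem hm, hchoose]
      rw [pcomp_r]
      simp only [embOut_inl, embOut_inr]
      have s1 : (glue n (kerS (phiAlpha σ g)) τ).r (Sum.inl i) (Sum.inr (Sum.inl m)) := by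
        simpa using glue_bot (τ := kerS (phiAlpha σ g)) hbot
      have s2 : (glue n (kerS (phiAlpha σ g)) τ).r (Sum.inr (Sum.inl m))
          (Sum.inr (Sum.inr j)) := by
        simpa using glue_top (ρ := τ)
          (show (kerS (phiAlpha σ g)).r (Sum.inl m) (Sum.inr j) from htop)
      exact (glue n _ τ).trans' s1 s2
    · simp [psiMap, hQ] at hpsi
  apply Setoid.ext
  intro a b
  show _ ↔ (kerS (psiMap σ τ g)).r a b
  rw [kerS_r]
  constructor
  · intro h
    have hmix : ∀ (i : Fin n) (m' : Fin n), τ.r (Sum.inl i) (Sum.inr m') →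
        L1map σ τ g (embBot n (Sum.inl i)) = L1map σ τ g (embBot n (Sum.inr m')) := by
      intro i m' hr
      have hD : {x | τ.r x (Sum.inl i)} = {x | τ.r x (Sum.inr m')} := class_eq_iff.mpr hr
      by_cases hP : ∃ C ∈ propC n σ, (Sum.inr m' : DVert n) ∈ g C
      · have hQ : ∃ C ∈ propC n σ, g C = {x | τ.r x (Sum.inl i)} := by
          rw [hD]; exact (condQP' hg).mpr hP
        simp only [L1map, psiMap, embBot_inl, embBot_inr, Sum.elim_inl, Sum.elim_inr,
          dif_pos hQ, dif_pos hP, Sum.inl.injEq]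
        exact uniqP hginj hQ hP.choose_spec.1
          ((class_rep (hg _ hP.choose_spec.1).1 hP.choose_spec.2).trans hD.symm)
      · have hQ : ¬∃ C ∈ propC n σ, g C = {x | τ.r x (Sum.inl i)} := by
          rw [hD]; exact fun hx => hP ((condQP' hg).mp hx)
        simp only [L1map, psiMap, embBot_inl, embBot_inr, Sum.elim_inl, Sum.elim_inr,
          dif_neg hQ, dif_neg hP, Sum.inr.injEq]
        exact hD
    have hc1 : ∀ x y, τ.r x y → L1map σ τ g (embBot n x) = L1map σ τ g (embBot n y) := by
      rintro (i | m) (i' | m') hr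
      · have hD : {x | τ.r x (Sum.inl i)} = {x | τ.r x (Sum.inl i')} := class_eq_iff.mpr hr
        simp only [L1map, psiMap, embBot_inl, Sum.elim_inl]
        rw [hD]
      · exact hmix i m' hr
      · exact (hmix i' m (τ.symm' hr)).symm
      · have hD : {x | τ.r x (Sum.inr m)} = {x | τ.r x (Sum.inr m')} := class_eq_iff.mpr hr
        by_cases hP : ∃ C ∈ propC n σ, (Sum.inr m : DVert n) ∈ g C
        · have hP' : ∃ C ∈ propC n σ, (Sum.inr m' : DVert n) ∈ g C := by
            have := (condQP' hg).mpr hP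
            rw [hD] at this
            exact (condQP' hg).mp this
          simp only [L1map, embBot_inr, Sum.elim_inr, Sum.elim_inl, dif_pos hP, dif_pos hP',
            Sum.inl.injEq]
          refine hginj hP.choose_spec.1 hP'.choose_spec.1 ?_
          rw [class_rep (hg _ hP.choose_spec.1).1 hP.choose_spec.2,
            class_rep (hg _ hP'.choose_spec.1).1 hP'.choose_spec.2, hD]
        · have hP' : ¬∃ C ∈ propC n σ, (Sum.inr m' : DVert n) ∈ g C := by
            intro hx
            apply hP
            have := (condQP' hg).mpr hx
            rw [← hD] at this
            exact (condQP' hg).mp this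
          simp only [L1map, embBot_inr, Sum.elim_inr, Sum.elim_inl, dif_neg hP, dif_neg hP',
            Sum.inr.injEq]
          exact hD
    have hmix2 : ∀ (m j : Fin n), phiAlpha σ g (Sum.inl m) = phiAlpha σ g (Sum.inr j) →
        L1map σ τ g (embTop n (Sum.inl m)) = L1map σ τ g (embTop n (Sum.inr j)) := by
      intro m j hr
      by_cases hP : ∃ C ∈ propC n σ, (Sum.inr m : DVert n) ∈ g C
      · simp only [phiAlpha, Sum.elim_inl, Sum.elim_inr, dif_pos hP, Sum.inl.injEq] at hr
        simp only [L1map, embTop_inl, embTop_inr, Sum.elim_inr, Sum.elim_inl, dif_pos hP,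
          Sum.inl.injEq]
        exact hr
      · simp [phiAlpha, dif_neg hP] at hr
    have hc2 : ∀ x y, (kerS (phiAlpha σ g)).r x y →
        L1map σ τ g (embTop n x) = L1map σ τ g (embTop n y) := by
      rintro (m | j) (m' | j') hr
      · rw [kerS_r] at hr
        by_cases hP : ∃ C ∈ propC n σ, (Sum.inr m : DVert n) ∈ g C
        · by_cases hP' : ∃ C ∈ propC n σ, (Sum.inr m' : DVert n) ∈ g C
          · simp only [phiAlpha, Sum.elim_inl, dif_pos hP, dif_pos hP', Sum.inl.injEq] at hr
            simp only [L1map, embTop_inl, Sum.elim_inr, Sum.elim_inl, dif_pos hP, dif_pos hP',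
              Sum.inl.injEq]
            exact hr
          · simp [phiAlpha, dif_pos hP, dif_neg hP'] at hr
        · by_cases hP' : ∃ C ∈ propC n σ, (Sum.inr m' : DVert n) ∈ g C
          · simp [phiAlpha, dif_neg hP, dif_pos hP'] at hr
          · simp only [phiAlpha, Sum.elim_inl, dif_neg hP, dif_neg hP', Sum.inr.injEq] at hr
            subst hr; rfl
      · exact hmix2 m j' hr
      · exact (hmix2 m' j (Setoid.symm' _ hr)).symm
      · rw [kerS_r] at hr
        simp only [phiAlpha, Sum.elim_inr, Sum.inl.injEq] at hr
        simp only [L1map, embTop_inr, Sum.elim_inr, Sum.inl.injEq]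
        exact hr
    have hL := glue_label (L1map σ τ g) hc1 hc2 _ _ h
    rwa [L1out, L1out] at hL
  · intro h
    rcases a with i | j <;> rcases b with i' | j'
    · by_cases hQ : ∃ C ∈ propC n σ, g C = {x | τ.r x (Sum.inl i)}
      · by_cases hQ' : ∃ C ∈ propC n σ, g C = {x | τ.r x (Sum.inl i')}
        · simp only [psiMap, Sum.elim_inl, dif_pos hQ, dif_pos hQ', Sum.inl.injEq] at h
          have hbot : τ.r (Sum.inl i) (Sum.inl i') := by
            rw [← class_eq_iff (σ := τ), ← hQ.choose_spec.2, ← hQ'.choose_spec.2, h]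
          rw [pcomp_r]
          simp only [embOut_inl]
          simpa using glue_bot (τ := kerS (phiAlpha σ g)) hbot
        · simp [psiMap, dif_pos hQ, dif_neg hQ'] at h
      · by_cases hQ' : ∃ C ∈ propC n σ, g C = {x | τ.r x (Sum.inl i')}
        · simp [psiMap, dif_neg hQ, dif_pos hQ'] at h
        · simp only [psiMap, Sum.elim_inl, dif_neg hQ, dif_neg hQ', Sum.inr.injEq] at h
          have hbot : τ.r (Sum.inl i) (Sum.inl i') := class_eq_iff.mp h
          rw [pcomp_r]
          simp only [embOut_inl]
          simpa using glue_bot (τ := kerS (phiAlpha σ g)) hbot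
    · exact hcross i j' h
    · exact Setoid.symm' _ (hcross i' j h.symm)
    · simp only [psiMap, Sum.elim_inr, Sum.inl.injEq] at h
      have hα : (kerS (phiAlpha σ g)).r (Sum.inr j) (Sum.inr j') := by
        rw [kerS_r]
        simp only [phiAlpha, Sum.elim_inr, Sum.inl.injEq]
        exact h
      rw [pcomp_r]
      simp only [embOut_inr]
      simpa using glue_top (ρ := τ) hα

end Step1
section Step2

variable {n : ℕ} {σ τ : Setoid (DVert n)} {g : Set (DVert n) → Set (DVert n)}

lemma L2out (σ τ : Setoid (DVert n)) (g) (v : DVert n) :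
    L2map σ τ g (embOut n v) = Sum.inl {x | σ.r x v} := by
  rcases v with i | j <;> rfl

set_option maxHeartbeats 2000000 in
lemma step2 (hg : ∀ C ∈ propC n σ, g C ∈ propC n τ) (hginj : Set.InjOn g (propC n σ)) :
    pcomp n (kerS (psiMap σ τ g)) (kerS (phiBeta σ g)) = σ := by
  have hcross : ∀ (i j : Fin n), σ.r (Sum.inl i) (Sum.inr j) →
      (pcomp n (kerS (psiMap σ τ g)) (kerS (phiBeta σ g))).r (Sum.inl i) (Sum.inr j) := by
    intro i j hσ
    have hCmem : {x | σ.r x (Sum.inl i)} ∈ propC n σ :=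
      ⟨Setoid.mem_classes σ _, ⟨i, σ.refl' _⟩, ⟨j, σ.symm' hσ⟩⟩
    obtain ⟨m, hm⟩ := (hg _ hCmem).2.1
    have hPm : ∃ C' ∈ propC n σ, (Sum.inl m : DVert n) ∈ g C' :=
      ⟨{x | σ.r x (Sum.inl i)}, hCmem, hm⟩
    have hβ : phiBeta σ g (Sum.inl i) = phiBeta σ g (Sum.inr m) := by
      simp only [phiBeta, Sum.elim_inl, Sum.elim_inr, dif_pos hPm]
      rw [uniqB hg hginj hPm hCmem hm]
    have hQ : ∃ C' ∈ propC n σ, g C' = {x | τ.r x (Sum.inl m)} :=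
      ⟨{x | σ.r x (Sum.inl i)}, hCmem, class_rep (hg _ hCmem).1 hm⟩
    have hψ : psiMap σ τ g (Sum.inl m) = psiMap σ τ g (Sum.inr j) := by
      simp only [psiMap, Sum.elim_inl, Sum.elim_inr, dif_pos hQ]
      rw [uniqP hginj hQ hCmem (class_rep (hg _ hCmem).1 hm)]
      congr 1
      rw [class_eq_iff]
      exact hσ
    rw [pcomp_r]
    simp only [embOut_inl, embOut_inr]
    have s1 : (glue n (kerS (psiMap σ τ g)) (kerS (phiBeta σ g))).r (Sum.inl i)
        (Sum.inr (Sum.inl m)) := by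
      simpa using glue_bot (τ := kerS (psiMap σ τ g))
        (show (kerS (phiBeta σ g)).r (Sum.inl i) (Sum.inr m) from hβ)
    have s2 : (glue n (kerS (psiMap σ τ g)) (kerS (phiBeta σ g))).r (Sum.inr (Sum.inl m))
        (Sum.inr (Sum.inr j)) := by
      simpa using glue_top (ρ := kerS (phiBeta σ g))
        (show (kerS (psiMap σ τ g)).r (Sum.inl m) (Sum.inr j) from hψ)
    exact Setoid.trans' _ s1 s2
  apply Setoid.ext
  intro a b
  constructor
  · intro h
    have hmix : ∀ (i m : Fin n), phiBeta σ g (Sum.inl i) = phiBeta σ g (Sum.inr m) →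
        L2map σ τ g (embBot n (Sum.inl i)) = L2map σ τ g (embBot n (Sum.inr m)) := by
      intro i m hr
      by_cases hP : ∃ C ∈ propC n σ, (Sum.inl m : DVert n) ∈ g C
      · simp only [phiBeta, Sum.elim_inl, Sum.elim_inr, dif_pos hP, Sum.inl.injEq] at hr
        simp only [L2map, embBot_inl, embBot_inr, Sum.elim_inl, Sum.elim_inr, dif_pos hP,
          Sum.inl.injEq]
        exact hr
      · simp [phiBeta, dif_neg hP] at hr
    have hc1 : ∀ x y, (kerS (phiBeta σ g)).r x y →
        L2map σ τ g (embBot n x) = L2map σ τ g (embBot n y) := by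
      rintro (i | m) (i' | m') hr
      · rw [kerS_r] at hr
        simp only [phiBeta, Sum.elim_inl, Sum.inl.injEq] at hr
        simp only [L2map, embBot_inl, Sum.elim_inl, Sum.inl.injEq]
        exact hr
      · exact hmix i m' hr
      · exact (hmix i' m (Setoid.symm' _ hr)).symm
      · rw [kerS_r] at hr
        by_cases hP : ∃ C ∈ propC n σ, (Sum.inl m : DVert n) ∈ g C
        · by_cases hP' : ∃ C ∈ propC n σ, (Sum.inl m' : DVert n) ∈ g C
          · simp only [phiBeta, Sum.elim_inr, dif_pos hP, dif_pos hP', Sum.inl.injEq] at hr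
            simp only [L2map, embBot_inr, Sum.elim_inr, Sum.elim_inl, dif_pos hP, dif_pos hP',
              Sum.inl.injEq]
            exact hr
          · simp [phiBeta, dif_pos hP, dif_neg hP'] at hr
        · by_cases hP' : ∃ C ∈ propC n σ, (Sum.inl m' : DVert n) ∈ g C
          · simp [phiBeta, dif_neg hP, dif_pos hP'] at hr
          · simp only [phiBeta, Sum.elim_inr, dif_neg hP, dif_neg hP', Sum.inr.injEq] at hr
            subst hr; rfl
    have hchooseBQ : ∀ (m : Fin n) (hQ : ∃ C ∈ propC n σ, g C = {x | τ.r x (Sum.inl m)})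
        (hP : ∃ C ∈ propC n σ, (Sum.inl m : DVert n) ∈ g C), hP.choose = hQ.choose := by
      intro m hQ hP
      refine uniqB hg hginj hP hQ.choose_spec.1 ?_
      rw [hQ.choose_spec.2]
      exact τ.refl' _
    have hmix2 : ∀ (m j : Fin n), psiMap σ τ g (Sum.inl m) = psiMap σ τ g (Sum.inr j) →
        L2map σ τ g (embTop n (Sum.inl m)) = L2map σ τ g (embTop n (Sum.inr j)) := by
      intro m j hr
      by_cases hQ : ∃ C ∈ propC n σ, g C = {x | τ.r x (Sum.inl m)}
      · simp only [psiMap, Sum.elim_inl, Sum.elim_inr, dif_pos hQ, Sum.inl.injEq] at hr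
        have hP : ∃ C ∈ propC n σ, (Sum.inl m : DVert n) ∈ g C := (condQP hg).mp hQ
        simp only [L2map, embTop_inl, embTop_inr, Sum.elim_inr, Sum.elim_inl, dif_pos hP,
          Sum.inl.injEq]
        rw [hchooseBQ m hQ hP]
        exact hr
      · simp [psiMap, dif_neg hQ] at hr
    have hc2 : ∀ x y, (kerS (psiMap σ τ g)).r x y →
        L2map σ τ g (embTop n x) = L2map σ τ g (embTop n y) := by
      rintro (m | j) (m' | j') hr
      · rw [kerS_r] at hr
        by_cases hQ : ∃ C ∈ propC n σ, g C = {x | τ.r x (Sum.inl m)}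
        · by_cases hQ' : ∃ C ∈ propC n σ, g C = {x | τ.r x (Sum.inl m')}
          · simp only [psiMap, Sum.elim_inl, dif_pos hQ, dif_pos hQ', Sum.inl.injEq] at hr
            have hP : ∃ C ∈ propC n σ, (Sum.inl m : DVert n) ∈ g C := (condQP hg).mp hQ
            have hP' : ∃ C ∈ propC n σ, (Sum.inl m' : DVert n) ∈ g C := (condQP hg).mp hQ'
            simp only [L2map, embTop_inl, Sum.elim_inr, Sum.elim_inl, dif_pos hP, dif_pos hP',
              Sum.inl.injEq]
            rw [hchooseBQ m hQ hP, hchooseBQ m' hQ' hP']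
            exact hr
          · simp [psiMap, dif_pos hQ, dif_neg hQ'] at hr
        · by_cases hQ' : ∃ C ∈ propC n σ, g C = {x | τ.r x (Sum.inl m')}
          · simp [psiMap, dif_neg hQ, dif_pos hQ'] at hr
          · simp only [psiMap, Sum.elim_inl, dif_neg hQ, dif_neg hQ', Sum.inr.injEq] at hr
            have hP : ¬∃ C ∈ propC n σ, (Sum.inl m : DVert n) ∈ g C :=
              fun hx => hQ ((condQP hg).mpr hx)
            have hP' : ¬∃ C ∈ propC n σ, (Sum.inl m' : DVert n) ∈ g C :=
              fun hx => hQ' ((condQP hg).mpr hx)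
            simp only [L2map, embTop_inl, Sum.elim_inr, Sum.elim_inl, dif_neg hP, dif_neg hP',
              Sum.inr.injEq]
            exact hr
      · exact hmix2 m j' hr
      · exact (hmix2 m' j (Setoid.symm' _ hr)).symm
      · rw [kerS_r] at hr
        simp only [psiMap, Sum.elim_inr, Sum.inl.injEq] at hr
        simp only [L2map, embTop_inr, Sum.elim_inr, Sum.inl.injEq]
        exact hr
    have hL := glue_label (L2map σ τ g) hc1 hc2 _ _ h
    rw [L2out, L2out, Sum.inl.injEq] at hL
    exact class_eq_iff.mp hL
  · intro h
    rcases a with i | j <;> rcases b with i' | j'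
    · have hβ : (kerS (phiBeta σ g)).r (Sum.inl i) (Sum.inl i') := by
        rw [kerS_r]
        simp only [phiBeta, Sum.elim_inl, Sum.inl.injEq]
        rw [class_eq_iff]
        exact h
      rw [pcomp_r]
      simp only [embOut_inl]
      simpa using glue_bot (τ := kerS (psiMap σ τ g)) hβ
    · exact hcross i j' h
    · exact Setoid.symm' _ (hcross i' j (σ.symm' h))
    · have hψ : (kerS (psiMap σ τ g)).r (Sum.inr j) (Sum.inr j') := by
        rw [kerS_r]
        simp only [psiMap, Sum.elim_inr, Sum.inl.injEq]
        rw [class_eq_iff]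
        exact h
      rw [pcomp_r]
      simp only [embOut_inr]
      simpa using glue_top (ρ := kerS (phiBeta σ g)) hψ

end Step2

section Factor

variable {n : ℕ}

lemma exists_factor (σ τ : Setoid (DVert n)) (h : prank n σ ≤ prank n τ) :
    ∃ α β, pcomp n (pcomp n α τ) β = σ := by
  classical
  have hfin_s := Set.toFinite (propC n σ)
  have hfin_t := Set.toFinite (propC n τ)
  have hen : (propC n σ).encard ≤ (propC n τ).encard := by
    rw [← hfin_s.cast_ncard_eq, ← hfin_t.cast_ncard_eq]
    exact_mod_cast h
  obtain ⟨g, hgsub, hginj⟩ := hfin_s.exists_injOn_of_encard_le hen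
  have hg : ∀ C ∈ propC n σ, g C ∈ propC n τ := fun C hC => hgsub hC
  refine ⟨kerS (phiAlpha σ g), kerS (phiBeta σ g), ?_⟩
  rw [step1 hg hginj, step2 hg hginj]

end Factor
section Algebra

variable {n : ℕ} {δ : ℂ}

lemma pmul_single_single (a b : Setoid (DVert n)) (c d : ℂ) :
    pmul n δ (Finsupp.single a c) (Finsupp.single b d) =
      Finsupp.single (pcomp n a b) (δ ^ ccount n a b * (c * d)) := by
  unfold pmul
  rw [Finsupp.sum_single_index, Finsupp.sum_single_index]
  · simp
  · rw [Finsupp.sum_single_index] <;> simp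

lemma pmul_mem_supported {f g : Setoid (DVert n) →₀ ℂ} {S : Set (Setoid (DVert n))}
    (h : ∀ a ∈ f.support, ∀ b ∈ g.support, pcomp n a b ∈ S) :
    pmul n δ f g ∈ Finsupp.supported ℂ ℂ S := by
  unfold pmul Finsupp.sum
  refine Submodule.sum_mem _ fun a ha => Submodule.sum_mem _ fun b hb => ?_
  exact Finsupp.single_mem_supported ℂ _ (h a ha b hb)

lemma ideal_eq (hδ : δ ≠ 0) (τ : Setoid (DVert n)) :
    Submodule.span ℂ {z | ∃ x y, z = pmul n δ (pmul n δ x (Finsupp.single τ 1)) y} =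
      Finsupp.supported ℂ ℂ {σ | prank n σ ≤ prank n τ} := by
  apply le_antisymm
  · rw [Submodule.span_le]
    rintro z ⟨x, y, rfl⟩
    refine pmul_mem_supported ?_
    intro a ha b _
    have h1 : pmul n δ x (Finsupp.single τ 1) ∈
        Finsupp.supported ℂ ℂ {σ | prank n σ ≤ prank n τ} := by
      refine pmul_mem_supported ?_
      intro a' _ b' hb'
      have hb'' : b' = τ := by simpa using Finsupp.support_single_subset hb'
      subst hb''
      exact prank_pcomp_le_right a' b'
    have ha' : a ∈ {σ | prank n σ ≤ prank n τ} := (Finsupp.mem_supported ℂ _).mp h1 ha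
    exact le_trans (prank_pcomp_le_left a b) ha'
  · rw [Finsupp.supported_eq_span_single, Submodule.span_le]
    rintro z ⟨σ', hσ', rfl⟩
    obtain ⟨α, β, hfac⟩ := exists_factor σ' τ hσ'
    set e : ℂ := δ ^ ccount n (pcomp n α τ) β * (δ ^ ccount n α τ * (1 * 1) * 1) with he
    have hz : pmul n δ (pmul n δ (Finsupp.single α 1) (Finsupp.single τ 1))
        (Finsupp.single β 1) = Finsupp.single σ' e := by
      rw [pmul_single_single, pmul_single_single, hfac]
    have hmem : Finsupp.single σ' e ∈ Submodule.span ℂ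
        {z | ∃ x y, z = pmul n δ (pmul n δ x (Finsupp.single τ 1)) y} := by
      rw [← hz]
      exact Submodule.subset_span ⟨_, _, rfl⟩
    have hene : e ≠ 0 := by
      simp only [he, mul_one, one_mul]
      exact mul_ne_zero (pow_ne_zero _ hδ) (pow_ne_zero _ hδ)
    have hsingle : (fun i => Finsupp.single i (1 : ℂ)) σ' = e⁻¹ • Finsupp.single σ' e := by
      rw [Finsupp.smul_single, smul_eq_mul, inv_mul_cancel₀ hene]
    rw [hsingle]
    exact Submodule.smul_mem _ _ hmem

end Algebra
/-- two diagrams generate the same two-sided ideal of the partition algebra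
`𝐏ₙ(δ)`, `δ ≠ 0`, if and only if they have the same rank. -/
theorem two_sided_ideal_iff_rank (n : ℕ) (δ : ℂ) (hδ : δ ≠ 0) (τ ρ : Setoid (DVert n)) :
    Submodule.span ℂ
        {z | ∃ x y, z = pmul n δ (pmul n δ x (Finsupp.single τ 1)) y} =
      Submodule.span ℂ
        {z | ∃ x y, z = pmul n δ (pmul n δ x (Finsupp.single ρ 1)) y} ↔
    prank n τ = prank n ρ := by
  rw [ideal_eq hδ τ, ideal_eq hδ ρ]
  constructor
  · intro h
    have hsub : ∀ (a b : Setoid (DVert n)),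
        Finsupp.supported ℂ ℂ {σ | prank n σ ≤ prank n a} =
          Finsupp.supported ℂ ℂ {σ | prank n σ ≤ prank n b} → prank n a ≤ prank n b := by
      intro a b hab
      have h1 : Finsupp.single a (1 : ℂ) ∈
          Finsupp.supported ℂ ℂ {σ | prank n σ ≤ prank n a} :=
        Finsupp.single_mem_supported ℂ 1 (show prank n a ≤ prank n a from le_refl _)
      rw [hab, Finsupp.mem_supported] at h1
      have ha : a ∈ (Finsupp.single a (1 : ℂ)).support := by
        rw [Finsupp.support_single_ne_zero a one_ne_zero]
        exact Finset.mem_singleton_self a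
      exact h1 ha
    exact le_antisymm (hsub τ ρ h) (hsub ρ τ h.symm)
  · intro h
    rw [h]

end
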